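/- arXiv:2003.09297 — 7 statements merged into one kernel-verified Lean document; each statement's English description precedes it below -/
import Mathlib

section
/- Suppose a sequence of vectors z(t) ∈ ℝ^{⌊n/2⌋} satisfies: n·z_1(t+1) = (n - 5/2)·z_1(t) + z_2(t), and for 2 ≤ i ≤ ⌊n/2⌋, n·z_i(t+1) = -z_1(t) + z_{i-1}(t) + (n-2)·z_i(t) + z_{i+1}(t) (with the convention z_{⌊n/2⌋+1}(t) = z_{⌈n/2⌉-1}(t)). If 0 ≤ z_1(0) ≤ z_2(0) ≤ … ≤ z_{⌊n/2⌋}(0), then for all t ≥ 0 we have 0 ≤ z_1(t) ≤ z_2(t) ≤ … ≤ z_{⌊n/2⌋}(t). -/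
/-- Monotone invariance: the linear recursion preserves sorted nonnegativity. -/
theorem stmt3 (n : ℕ) (hn : 5 ≤ n) (m : ℕ) (hm : m = n / 2)
    (z : ℕ → ℕ → ℝ)
    (hconv : ∀ t, z t (m + 1) = z t ((n + 1) / 2 - 1))
    (h1 : ∀ t, (n : ℝ) * z (t+1) 1 = ((n : ℝ) - 5/2) * z t 1 + z t 2)
    (hi : ∀ t i, 2 ≤ i → i ≤ m →
      (n : ℝ) * z (t+1) i = -(z t 1) + z t (i-1) + ((n : ℝ) - 2) * z t i + z t (i+1))
    (h0 : 0 ≤ z 0 1 ∧ ∀ i, 1 ≤ i → i < m → z 0 i ≤ z 0 (i+1)) :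
    ∀ t, 0 ≤ z t 1 ∧ ∀ i, 1 ≤ i → i < m → z t i ≤ z t (i+1) := by
  have hm2 : 2 ≤ m := by omega
  have hn5 : (5:ℝ) ≤ (n:ℝ) := by exact_mod_cast hn
  have hn0 : (0:ℝ) < (n:ℝ) := by linarith
  intro t
  induction t with
  | zero => exact h0
  | succ t ih =>
    obtain ⟨hz1, hsort⟩ := ih
    -- monotonicity within the range
    have mono : ∀ j, j ≤ m → ∀ i, 1 ≤ i → i ≤ j → z t i ≤ z t j := by
      intro j
      induction j with
      | zero => intro _ i hi1 hi2; omega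
      | succ j ihj =>
        intro hj i hi1 hij
        rcases eq_or_lt_of_le hij with h | h
        · rw [h]
        · have h1' : z t i ≤ z t j := ihj (by omega) i hi1 (by omega)
          have h2' : z t j ≤ z t (j+1) := hsort j (by omega) (by omega)
          linarith
    -- skipping by two, allowing the wrap-around index m+1
    have skip2 : ∀ i, 1 ≤ i → i + 2 ≤ m + 1 → z t i ≤ z t (i+2) := by
      intro i hi1 hi2
      rcases eq_or_lt_of_le hi2 with h | h
      · rw [h, hconv t]
        have hj : i ≤ (n+1)/2 - 1 ∧ (n+1)/2 - 1 ≤ m := by omega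
        exact mono _ hj.2 i hi1 hj.1
      · exact mono (i+2) (by omega) i hi1 (by omega)
    constructor
    · -- nonnegativity of the first coordinate
      have e1 := h1 t
      have h12 : z t 1 ≤ z t 2 := mono 2 hm2 1 le_rfl (by omega)
      have key1 : 0 ≤ ((n:ℝ) - 5/2) * z t 1 := mul_nonneg (by linarith) hz1
      have hd : (n:ℝ) * 0 ≤ (n:ℝ) * z (t+1) 1 := by
        have : (0:ℝ) ≤ (n:ℝ) * z (t+1) 1 := by linarith
        linarith
      exact le_of_mul_le_mul_left hd hn0
    · intro i hi1 him
      rcases eq_or_lt_of_le hi1 with rfl | h2i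
      · -- i = 1
        have e1 := h1 t
        have e2 := hi t 2 le_rfl (by omega)
        norm_num at e2
        have h12 : z t 1 ≤ z t 2 := mono 2 hm2 1 le_rfl (by omega)
        have h13 : z t 1 ≤ z t 3 := skip2 1 le_rfl (by omega)
        have key2 : 0 ≤ ((n:ℝ) - 3) * (z t 2 - z t 1) :=
          mul_nonneg (by linarith) (by linarith)
        have hd : (n:ℝ) * z (t+1) 1 ≤ (n:ℝ) * z (t+1) 2 := by nlinarith
        exact le_of_mul_le_mul_left hd hn0
      · -- 2 ≤ i
        have e1 := hi t i (by omega) (by omega)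
        have e2 := hi t (i+1) (by omega) (by omega)
        simp only [Nat.add_sub_cancel] at e2
        have hzm1 : z t (i-1) ≤ z t i := mono i (by omega) (i-1) (by omega) (by omega)
        have hup : z t i ≤ z t (i+1) := hsort i (by omega) him
        have hskip : z t i ≤ z t (i+2) := skip2 i (by omega) (by omega)
        have key : 0 ≤ ((n:ℝ) - 3) * (z t (i+1) - z t i) :=
          mul_nonneg (by linarith) (by linarith)
        have hd : (n:ℝ) * z (t+1) i ≤ (n:ℝ) * z (t+1) (i+1) := by nlinarith
        exact le_of_mul_le_mul_left hd hn0
end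

section
/- Under the linear recursion for z(t) and assuming coordinates are sorted and nonnegative at every step, for every 1 ≤ i ≤ ⌊n/2⌋ - 1 and every t, z_i(t+1) ≥ z_{i+1}(t)/n. Consequently z_1(t + ⌊n/2⌋) ≥ (1/n)^{⌊n/2⌋ - 1} · z_{⌊n/2⌋}(t+1). -/
/-- Lower-bound propagation: z_i(t+1) ≥ z_{i+1}(t)/n, and its iterated consequence. -/
theorem stmt5 (n : ℕ) (hn : 5 ≤ n) (m : ℕ) (hm : m = n / 2)
    (z : ℕ → ℕ → ℝ)
    (hconv : ∀ t, z t (m + 1) = z t ((n + 1) / 2 - 1))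
    (h1 : ∀ t, (n : ℝ) * z (t+1) 1 = ((n : ℝ) - 5/2) * z t 1 + z t 2)
    (hi : ∀ t i, 2 ≤ i → i ≤ m →
      (n : ℝ) * z (t+1) i = -(z t 1) + z t (i-1) + ((n : ℝ) - 2) * z t i + z t (i+1))
    (hsorted : ∀ t, 0 ≤ z t 1 ∧ ∀ i, 1 ≤ i → i < m → z t i ≤ z t (i+1)) :
    (∀ t i, 1 ≤ i → i ≤ m - 1 → z (t+1) i ≥ z t (i+1) / n) ∧
    (∀ t, z (t + m) 1 ≥ (1 / (n : ℝ))^(m-1) * z (t+1) m) := by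
  have hm2 : 2 ≤ m := by omega
  have hn5 : (5:ℝ) ≤ (n:ℝ) := by exact_mod_cast hn
  have hn0 : (0:ℝ) < (n:ℝ) := by linarith
  have mono : ∀ t a b, 1 ≤ a → a ≤ b → b ≤ m → z t a ≤ z t b := by
    intro t a b ha hab hbm
    induction b with
    | zero => omega
    | succ b ih =>
      rcases Nat.eq_or_lt_of_le hab with h | h
      · rw [h]
      · have hb : a ≤ b := by omega
        have hst : z t b ≤ z t (b+1) := (hsorted t).2 b (by omega) (by omega)
        exact le_trans (ih hb (by omega)) hst
  have nonneg : ∀ t i, 1 ≤ i → i ≤ m → 0 ≤ z t i := fun t i hi1 him =>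
    le_trans (hsorted t).1 (mono t 1 i le_rfl hi1 him)
  have part1 : ∀ t i, 1 ≤ i → i ≤ m - 1 → z (t+1) i ≥ z t (i+1) / n := by
    intro t i hi1 him
    rw [ge_iff_le, div_le_iff₀ hn0]
    rcases Nat.eq_or_lt_of_le hi1 with h | h
    · subst h
      have heq := h1 t
      have h01 : 0 ≤ z t 1 := (hsorted t).1
      nlinarith [heq]
    · have h2i : 2 ≤ i := h
      have heq := hi t i h2i (by omega)
      have hz1 : z t 1 ≤ z t (i-1) := mono t 1 (i-1) le_rfl (by omega) (by omega)
      have hzi : 0 ≤ z t i := nonneg t i (by omega) (by omega)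
      nlinarith [heq]
  refine ⟨part1, ?_⟩
  intro t
  have key : ∀ k, k ≤ m - 1 → z (t + 1 + k) (m - k) ≥ (1/(n:ℝ))^k * z (t+1) m := by
    intro k hk
    induction k with
    | zero => simp
    | succ k ih =>
      have ihk := ih (by omega)
      have step := part1 (t + 1 + k) (m - k - 1) (by omega) (by omega)
      have e1 : m - k - 1 + 1 = m - k := by omega
      rw [e1] at step
      have h2 : (1/(n:ℝ))^k * z (t+1) m / n ≤ z (t+1+k) (m-k) / n := by
        gcongr
      have e2 : t + 1 + (k+1) = (t + 1 + k) + 1 := by omega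
      have e3 : m - (k+1) = m - k - 1 := by omega
      rw [e2, e3]
      have e4 : (1/(n:ℝ))^(k+1) * z (t+1) m = (1/(n:ℝ))^k * z (t+1) m / n := by
        rw [pow_succ]; field_simp
      rw [e4]
      exact le_trans h2 step
  have fin := key (m-1) le_rfl
  have e1 : t + 1 + (m-1) = t + m := by omega
  have e2 : m - (m-1) = 1 := by omega
  rw [e1, e2] at fin
  exact fin
end

section
/- For a cycle of length n = 2^m and load vector x : ZMod n → ℝ, define for a finite nonempty set A ⊆ ZMod n, Gap_A(x) = max_{i∈A} x(i) - min_{i∈A} x(i), and A_k^i = {i + j·2^k : 0 ≤ j < 2^{m-k}}. Then for all i and 1 ≤ k ≤ m: 2·Gap_{A_{k-1}^i}(x) ≤ 2·max_{j ∈ A_{k-1}^i} |x(j) - x(j + 2^{k-1})| + Gap_{A_k^{i + 2^{k-1}}}(x) + Gap_{A_k^i}(x). -/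
/-- Gap covering lemma for the power-of-two cycle: merging A_k^i with A_k^{i+2^{k-1}}. -/
theorem stmt7 (m : ℕ) (hm : 1 ≤ m) (x : ZMod (2^m) → ℝ)
    (A : ℕ → ZMod (2^m) → Finset (ZMod (2^m)))
    (hA : ∀ k i, A k i
      = Finset.image (fun j : ℕ => i + ((j * 2^k : ℕ) : ZMod (2^m))) (Finset.range (2^(m-k))))
    (hne : ∀ k i, (A k i).Nonempty)
    (i : ZMod (2^m)) (k : ℕ) (hk1 : 1 ≤ k) (hk2 : k ≤ m) :
    2 * ((A (k-1) i).sup' (hne _ _) x - (A (k-1) i).inf' (hne _ _) x) ≤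
      2 * (A (k-1) i).sup' (hne _ _) (fun j => |x j - x (j + ((2^(k-1) : ℕ) : ZMod (2^m)))|) +
      ((A k (i + ((2^(k-1) : ℕ) : ZMod (2^m)))).sup' (hne _ _) x
        - (A k (i + ((2^(k-1) : ℕ) : ZMod (2^m)))).inf' (hne _ _) x) +
      ((A k i).sup' (hne _ _) x - (A k i).inf' (hne _ _) x) := by
  set h : ZMod (2^m) := ((2^(k-1) : ℕ) : ZMod (2^m)) with hh
  have hmem : ∀ (k' : ℕ) (c j : ZMod (2^m)),
      j ∈ A k' c ↔ ∃ t, t < 2^(m-k') ∧ j = c + ((t * 2^k' : ℕ) : ZMod (2^m)) := by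
    intro k' c j
    rw [hA]
    simp only [Finset.mem_image, Finset.mem_range]
    constructor
    · rintro ⟨t, ht, rfl⟩; exact ⟨t, ht, rfl⟩
    · rintro ⟨t, ht, rfl⟩; exact ⟨t, ht, rfl⟩
  have hk' : k - 1 + 1 = k := Nat.succ_pred_eq_of_pos hk1
  have h2k : 2 * 2^(k-1) = 2^k := by rw [← pow_succ', hk']
  have hpow2 : 2^(k-1) + 2^(k-1) = 2^k := by rw [← two_mul, h2k]
  have hpowm : 2^(m-(k-1)) = 2 * 2^(m-k) := by
    rw [← pow_succ']; congr 1 <;> omega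
  have hpown : 2^(m-k) * 2^k = 2^m := by
    rw [← pow_add]; congr 1 <;> omega
  have hhh : h + h = ((2^k : ℕ) : ZMod (2^m)) := by
    rw [hh, ← Nat.cast_add, hpow2]
  -- shift from first part into second
  have hS : ∀ j, j ∈ A k i → j + h ∈ A k (i + h) := by
    intro j hj
    rw [hmem] at hj ⊢
    obtain ⟨t, ht, rfl⟩ := hj
    exact ⟨t, ht, by ring⟩
  -- shift from second part into first
  have hT : ∀ j, j ∈ A k (i + h) → j + h ∈ A k i := by
    intro j hj
    rw [hmem] at hj ⊢
    obtain ⟨t, ht, rfl⟩ := hj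
    refine ⟨(t+1) % 2^(m-k), Nat.mod_lt _ (Nat.pow_pos (by norm_num)), ?_⟩
    have hcast : (((t+1) * 2^k : ℕ) : ZMod (2^m)) = (((t+1) % 2^(m-k) * 2^k : ℕ) : ZMod (2^m)) := by
      rw [ZMod.natCast_eq_natCast_iff]
      have := (Nat.mod_modEq (t+1) (2^(m-k))).symm.mul_right' (c := 2^k)
      rw [hpown] at this
      exact this
    rw [← hcast]
    have e : i + h + ((t * 2^k : ℕ) : ZMod (2^m)) + h
        = i + (h + h) + ((t * 2^k : ℕ) : ZMod (2^m)) := by ring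
    rw [e, hhh]
    have e2 : (t+1) * 2^k = 2^k + t * 2^k := by ring
    rw [e2, Nat.cast_add]
    ring
  -- inclusions
  have hI1 : ∀ j, j ∈ A k i → j ∈ A (k-1) i := by
    intro j hj
    rw [hmem] at hj ⊢
    obtain ⟨t, ht, rfl⟩ := hj
    refine ⟨2*t, by omega, ?_⟩
    congr 2
    calc t * 2^k = t*(2*2^(k-1)) := by rw [h2k]
    _ = 2*t*2^(k-1) := by ring
  have hI2 : ∀ j, j ∈ A k (i + h) → j ∈ A (k-1) i := by
    intro j hj
    rw [hmem] at hj ⊢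
    obtain ⟨t, ht, rfl⟩ := hj
    refine ⟨2*t+1, by omega, ?_⟩
    have : (2*t+1)*2^(k-1) = t*2^k + 2^(k-1) := by
      calc (2*t+1)*2^(k-1) = t*(2*2^(k-1)) + 2^(k-1) := by ring
      _ = t * 2^k + 2^(k-1) := by rw [h2k]
    rw [this, Nat.cast_add, ← hh]
    ring
  -- covering
  have hC : ∀ j, j ∈ A (k-1) i → j ∈ A k i ∨ j ∈ A k (i + h) := by
    intro j hj
    rw [hmem] at hj
    obtain ⟨t, ht, rfl⟩ := hj
    rcases Nat.even_or_odd t with ⟨s, hs⟩ | ⟨s, hs⟩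
    · left
      rw [hmem]
      refine ⟨s, by omega, ?_⟩
      congr 2
      subst hs
      calc (s+s)*2^(k-1) = s*(2*2^(k-1)) := by ring
      _ = s * 2^k := by rw [h2k]
    · right
      rw [hmem]
      refine ⟨s, by omega, ?_⟩
      have : t*2^(k-1) = s*2^k + 2^(k-1) := by
        subst hs
        calc (2*s+1)*2^(k-1) = s*(2*2^(k-1)) + 2^(k-1) := by ring
        _ = s * 2^k + 2^(k-1) := by rw [h2k]
      rw [this, Nat.cast_add, ← hh]
      ring
  -- notation
  obtain ⟨a, ha, hsa⟩ := Finset.exists_mem_eq_sup' (hne (k-1) i) x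
  obtain ⟨b, hb, hib⟩ := Finset.exists_mem_eq_inf' (hne (k-1) i) x
  rw [hsa, hib]
  set D := (A (k-1) i).sup' (hne _ _) (fun j => |x j - x (j + h)|) with hD
  have habs : ∀ j, j ∈ A (k-1) i → |x j - x (j + h)| ≤ D :=
    fun j hj => Finset.le_sup' (fun j => |x j - x (j + h)|) hj
  have habs_a := habs a ha
  have habs_b := habs b hb
  rw [abs_le] at habs_a habs_b
  have hsup1 : ∀ j, j ∈ A k i → x j ≤ (A k i).sup' (hne _ _) x :=
    fun j hj => Finset.le_sup' _ hj
  have hinf1 : ∀ j, j ∈ A k i → (A k i).inf' (hne _ _) x ≤ x j :=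
    fun j hj => Finset.inf'_le _ hj
  have hsup2 : ∀ j, j ∈ A k (i + h) → x j ≤ (A k (i + h)).sup' (hne _ _) x :=
    fun j hj => Finset.le_sup' _ hj
  have hinf2 : ∀ j, j ∈ A k (i + h) → (A k (i + h)).inf' (hne _ _) x ≤ x j :=
    fun j hj => Finset.inf'_le _ hj
  rcases hC a ha with ha1 | ha2 <;> rcases hC b hb with hb1 | hb2
  · have h1 := hsup1 a ha1
    have h2 := hinf1 b hb1
    have h3 := hsup2 _ (hS a ha1)
    have h4 := hinf2 _ (hS b hb1)
    linarith
  · have h1 := hsup1 a ha1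
    have h2 := hinf1 _ (hT b hb2)
    have h3 := hsup2 _ (hS a ha1)
    have h4 := hinf2 b hb2
    linarith
  · have h1 := hsup1 _ (hT a ha2)
    have h2 := hinf1 b hb1
    have h3 := hsup2 a ha2
    have h4 := hinf2 _ (hS b hb1)
    linarith
  · have h1 := hsup1 _ (hT a ha2)
    have h2 := hinf1 _ (hT b hb2)
    have h3 := hsup2 a ha2
    have h4 := hinf2 b hb2
    linarith
end

section
/- For a cycle of length n = 2^m, load vector x : ZMod n → ℝ, and 0 ≤ k ≤ m-1: ∑_{i ∈ ZMod n} max_{j ∈ A_k^i} |x(j) - x(j + 2^k)| ≤ (n/√(2^k))·√(φ_{2^k}(x)), where φ_{2^k}(x) = ∑_{j ∈ ZMod n} (x(j) - x(j + 2^k))². -/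
/-- Sum of maximal 2^k-hop differences over the sets A_k^i is bounded via the hop potential. -/
theorem stmt8 (n m : ℕ) [NeZero n] (hn : n = 2^m) (hm : 1 ≤ m) (x : ZMod n → ℝ)
    (A : ℕ → ZMod n → Finset (ZMod n))
    (hA : ∀ k i, A k i
      = Finset.image (fun j : ℕ => i + ((j * 2^k : ℕ) : ZMod n)) (Finset.range (2^(m-k))))
    (hne : ∀ k i, (A k i).Nonempty)
    (k : ℕ) (hk : k ≤ m - 1) :
    ∑ i : ZMod n, (A k i).sup' (hne k i) (fun j => |x j - x (j + ((2^k : ℕ) : ZMod n))|) ≤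
      ((n : ℝ) / Real.sqrt (2^k))
        * Real.sqrt (∑ j : ZMod n, (x j - x (j + ((2^k : ℕ) : ZMod n)))^2) := by
  have hkm : k ≤ m := le_trans hk (Nat.sub_le m 1)
  set d : ZMod n → ℝ := fun j => x j - x (j + ((2^k : ℕ) : ZMod n)) with hd
  set g : ZMod n → ℝ := fun j => (d j)^2 with hg
  have hgnn : ∀ j, 0 ≤ g j := fun j => sq_nonneg _
  -- symmetry of membership
  have hmem : ∀ i j : ZMod n, j ∈ A k i → i ∈ A k j := by
    intro i j hj
    rw [hA] at hj ⊢
    simp only [Finset.mem_image, Finset.mem_range] at hj ⊢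
    obtain ⟨t, ht, rfl⟩ := hj
    rcases Nat.eq_zero_or_pos t with rfl | htpos
    · exact ⟨0, Nat.pow_pos (by norm_num), by simp⟩
    · refine ⟨2^(m-k) - t, by omega, ?_⟩
      have hsum : ((t * 2^k : ℕ) : ZMod n) + (((2^(m-k) - t) * 2^k : ℕ) : ZMod n) = 0 := by
        rw [← Nat.cast_add, ← Nat.add_mul, Nat.add_sub_cancel' (le_of_lt ht),
          ← pow_add, Nat.sub_add_cancel hkm, ← hn, ZMod.natCast_self]
      rw [add_assoc, hsum, add_zero]
  have hcardA : ∀ j : ZMod n, (A k j).card ≤ 2^(m-k) := by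
    intro j
    rw [hA]
    exact le_trans (Finset.card_image_le) (by simp)
  -- step 1: sup' bounded by sqrt of local sum
  have hstep1 : ∀ i : ZMod n,
      (A k i).sup' (hne k i) (fun j => |d j|) ≤ Real.sqrt (∑ j ∈ A k i, g j) := by
    intro i
    apply Finset.sup'_le
    intro j hj
    rw [← Real.sqrt_sq_eq_abs]
    exact Real.sqrt_le_sqrt (Finset.single_le_sum (fun a _ => hgnn a) hj)
  have hchain1 : ∑ i : ZMod n, (A k i).sup' (hne k i) (fun j => |d j|) ≤
      ∑ i : ZMod n, Real.sqrt (∑ j ∈ A k i, g j) :=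
    Finset.sum_le_sum fun i _ => hstep1 i
  -- step 2: Cauchy-Schwarz
  have hstep2 : ∑ i : ZMod n, Real.sqrt (∑ j ∈ A k i, g j) ≤
      Real.sqrt (n) * Real.sqrt (∑ i : ZMod n, ∑ j ∈ A k i, g j) := by
    have hsq := sq_sum_le_card_mul_sum_sq (s := (Finset.univ : Finset (ZMod n)))
      (f := fun i => Real.sqrt (∑ j ∈ A k i, g j))
    have hcard : (Finset.univ : Finset (ZMod n)).card = n := by
      simp [ZMod.card]
    rw [hcard] at hsq
    have hsimp : ∀ i : ZMod n, (Real.sqrt (∑ j ∈ A k i, g j))^2 = ∑ j ∈ A k i, g j := by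
      intro i
      exact Real.sq_sqrt (Finset.sum_nonneg fun j _ => hgnn j)
    rw [Finset.sum_congr rfl (fun i _ => hsimp i)] at hsq
    have h1 : (0:ℝ) ≤ ∑ i : ZMod n, Real.sqrt (∑ j ∈ A k i, g j) :=
      Finset.sum_nonneg fun i _ => Real.sqrt_nonneg _
    calc ∑ i : ZMod n, Real.sqrt (∑ j ∈ A k i, g j)
        = Real.sqrt ((∑ i : ZMod n, Real.sqrt (∑ j ∈ A k i, g j))^2) := by
          rw [Real.sqrt_sq h1]
      _ ≤ Real.sqrt ((n:ℝ) * ∑ i : ZMod n, ∑ j ∈ A k i, g j) := Real.sqrt_le_sqrt hsq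
      _ = Real.sqrt n * Real.sqrt (∑ i : ZMod n, ∑ j ∈ A k i, g j) := by
          rw [Real.sqrt_mul (by positivity)]
  -- step 3: double sum bound
  have hstep3 : ∑ i : ZMod n, ∑ j ∈ A k i, g j ≤ (2^(m-k) : ℝ) * ∑ j : ZMod n, g j := by
    have heq : ∀ i : ZMod n, ∑ j ∈ A k i, g j
        = ∑ j : ZMod n, if j ∈ A k i then g j else 0 := by
      intro i
      rw [Finset.sum_ite_mem, Finset.univ_inter]
    rw [Finset.sum_congr rfl (fun i _ => heq i), Finset.sum_comm]
    rw [Finset.mul_sum]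
    apply Finset.sum_le_sum
    intro j _
    rw [← Finset.sum_filter, Finset.sum_const, nsmul_eq_mul]
    apply mul_le_mul_of_nonneg_right _ (hgnn j)
    have hsub : Finset.univ.filter (fun i => j ∈ A k i) ⊆ A k j := by
      intro i hi
      simp only [Finset.mem_filter] at hi
      exact hmem i j hi.2
    calc ((Finset.univ.filter (fun i => j ∈ A k i)).card : ℝ)
        ≤ ((A k j).card : ℝ) := by exact_mod_cast Finset.card_le_card hsub
      _ ≤ (2^(m-k) : ℝ) := by exact_mod_cast hcardA j
  -- combine
  have hT : (0:ℝ) ≤ ∑ j : ZMod n, g j := Finset.sum_nonneg fun j _ => hgnn j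
  calc ∑ i : ZMod n, (A k i).sup' (hne k i) (fun j => |d j|)
      ≤ Real.sqrt n * Real.sqrt (∑ i : ZMod n, ∑ j ∈ A k i, g j) :=
        le_trans hchain1 hstep2
    _ ≤ Real.sqrt n * Real.sqrt ((2^(m-k) : ℝ) * ∑ j : ZMod n, g j) :=
        mul_le_mul_of_nonneg_left (Real.sqrt_le_sqrt hstep3) (Real.sqrt_nonneg _)
    _ = ((n : ℝ) / Real.sqrt (2^k)) * Real.sqrt (∑ j : ZMod n, g j) := by
        rw [Real.sqrt_mul (by positivity), ← mul_assoc, ← Real.sqrt_mul (by positivity)]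
        congr 1
        rw [eq_div_iff (by positivity), ← Real.sqrt_mul (by positivity)]
        rw [show ((n:ℝ) * (2:ℝ)^(m-k) * (2:ℝ)^k) = (n:ℝ) * ((2:ℝ)^(m-k) * (2:ℝ)^k) by ring,
          ← pow_add, Nat.sub_add_cancel hkm]
        have : ((2:ℝ)^m) = (n:ℝ) := by rw [hn]; push_cast; ring
        rw [this, Real.sqrt_mul_self (by positivity)]
end

section
/- For a cycle of length n = 2^m and load vector x : ZMod n → ℝ: n·Gap(x) ≤ √n·√(φ_{n/2}(x)) + ∑_{k=1}^{m-1} (n/√(2^{k-1}))·√(φ_{2^{k-1}}(x)), where Gap(x) = max_i x(i) - min_i x(i) and φ_d(x) = ∑_i (x(i) - x(i+d))². -/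
open Finset

-- sum over ZMod n = sum over range n
lemma zmod_sum_range {n : ℕ} [NeZero n] (g : ZMod n → ℝ) :
    ∑ j : ZMod n, g j = ∑ t ∈ Finset.range n, g (t : ZMod n) := by
  refine Finset.sum_nbij' (fun j => j.val) (fun t => (t : ZMod n)) ?_ ?_ ?_ ?_ ?_
  · intro a _; exact Finset.mem_range.2 (ZMod.val_lt a)
  · intro a _; exact Finset.mem_univ _
  · intro a _; exact ZMod.natCast_rightInverse a
  · intro a ha; exact ZMod.val_cast_of_lt (Finset.mem_range.1 ha)
  · intro a _; simp [ZMod.natCast_val]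

lemma zmod_shift_sum {n : ℕ} [NeZero n] (g : ZMod n → ℝ) (i : ZMod n) :
    ∑ t ∈ Finset.range n, g (i + (t : ZMod n)) = ∑ j : ZMod n, g j := by
  rw [← Equiv.sum_comp (Equiv.addLeft i) g]
  exact (zmod_sum_range (fun j => g (i + j))).symm

-- sum of squares over a window of length d ≤ n is at most the full φ-sum
lemma window_le_phi {n : ℕ} [NeZero n] (g : ZMod n → ℝ) (hg : ∀ j, 0 ≤ g j)
    (d : ℕ) (hd : d ≤ n) (i : ZMod n) :
    ∑ t ∈ Finset.range d, g (i + (t : ZMod n)) ≤ ∑ j : ZMod n, g j := by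
  have hinj : ∀ a ∈ Finset.range d, ∀ b ∈ Finset.range d,
      i + (a : ZMod n) = i + (b : ZMod n) → a = b := by
    intro a ha b hb hab
    have h2 : (a : ZMod n) = (b : ZMod n) := by
      have := add_left_cancel hab; exact this
    have := congrArg ZMod.val h2
    rwa [ZMod.val_cast_of_lt (lt_of_lt_of_le (Finset.mem_range.1 ha) hd),
      ZMod.val_cast_of_lt (lt_of_lt_of_le (Finset.mem_range.1 hb) hd)] at this
  calc ∑ t ∈ Finset.range d, g (i + (t : ZMod n))
      = ∑ j ∈ (Finset.range d).image (fun t : ℕ => i + (t : ZMod n)), g j :=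
        (Finset.sum_image hinj).symm
    _ ≤ ∑ j : ZMod n, g j :=
        Finset.sum_le_sum_of_subset_of_nonneg (Finset.subset_univ _)
          (fun j _ _ => hg j)

-- Cauchy-Schwarz: |∑_{t<d} a t| ≤ √d √(∑_{t<d} a t ^2) ≤ √d √Φ if ∑ a² ≤ Φ
lemma cs_bound (d : ℕ) (a : ℕ → ℝ) (Φ : ℝ)
    (h : ∑ t ∈ Finset.range d, (a t)^2 ≤ Φ) :
    |∑ t ∈ Finset.range d, a t| ≤ Real.sqrt d * Real.sqrt Φ := by
  have h1 : (∑ t ∈ Finset.range d, a t)^2 ≤ (d : ℝ) * Φ := by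
    calc (∑ t ∈ Finset.range d, a t)^2
        ≤ (Finset.range d).card * ∑ t ∈ Finset.range d, (a t)^2 :=
          sq_sum_le_card_mul_sum_sq
      _ ≤ (d : ℝ) * Φ := by
          rw [Finset.card_range]
          exact mul_le_mul_of_nonneg_left h (by positivity)
  calc |∑ t ∈ Finset.range d, a t|
      = Real.sqrt ((∑ t ∈ Finset.range d, a t)^2) := (Real.sqrt_sq_eq_abs _).symm
    _ ≤ Real.sqrt ((d : ℝ) * Φ) := Real.sqrt_le_sqrt h1
    _ = Real.sqrt d * Real.sqrt Φ := Real.sqrt_mul (by positivity) _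

lemma half_split {n : ℕ} [NeZero n] (x : ZMod n → ℝ) (h : ℕ) (hhn : h + h = n) (i : ZMod n) :
    ∑ j : ZMod n, (x j - x (j + (h : ZMod n)))^2
      = 2 * ∑ t ∈ Finset.range h, (x (i + (t:ZMod n)) - x (i + (t:ZMod n) + (h:ZMod n)))^2 := by
  have hz : (h : ZMod n) + (h : ZMod n) = 0 := by
    rw [← Nat.cast_add, hhn, ZMod.natCast_self]
  rw [← zmod_shift_sum (fun j => (x j - x (j + (h:ZMod n)))^2) i,
    show Finset.range n = Finset.range (h+h) from by rw [hhn],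
    Finset.sum_range_add]
  have key : ∀ t ∈ Finset.range h,
      (x (i + ((h + t : ℕ) : ZMod n)) - x (i + ((h + t : ℕ) : ZMod n) + (h:ZMod n)))^2
        = (x (i + (t:ZMod n)) - x (i + (t:ZMod n) + (h:ZMod n)))^2 := by
    intro t _
    have e1 : i + ((h + t : ℕ) : ZMod n) = i + (t : ZMod n) + (h : ZMod n) := by
      push_cast; ring
    have e2 : i + ((h + t : ℕ) : ZMod n) + (h : ZMod n) = i + (t : ZMod n) := by
      push_cast
      have : i + ((h:ZMod n) + (t:ZMod n)) + (h:ZMod n)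
          = i + (t:ZMod n) + ((h:ZMod n) + (h:ZMod n)) := by ring
      rw [this, hz, add_zero]
    rw [e2, e1, ← neg_sub (x (i + (t:ZMod n))) (x (i + (t:ZMod n) + (h:ZMod n))), neg_sq]
  rw [Finset.sum_congr rfl key]
  ring




/-- Gap covering bound: n·Gap(x) ≤ √n·√(φ_{n/2}) + ∑_{k=1}^{m-1} (n/√(2^{k-1}))·√(φ_{2^{k-1}}). -/
theorem stmt9 (n m : ℕ) [NeZero n] (hn : n = 2^m) (hm : 1 ≤ m) (x : ZMod n → ℝ)
    (φ : ℕ → ℝ) (hφ : ∀ d, φ d = ∑ i : ZMod n, (x i - x (i + (d : ZMod n)))^2) :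
    (n : ℝ) * (Finset.univ.sup' Finset.univ_nonempty x
        - Finset.univ.inf' Finset.univ_nonempty x) ≤
      Real.sqrt n * Real.sqrt (φ (n/2)) +
      ∑ k ∈ Finset.Icc 1 (m-1),
        ((n : ℝ) / Real.sqrt (2^(k-1))) * Real.sqrt (φ (2^(k-1))) := by
  classical
  set M := m - 1 with hM
  have hmM : m = M + 1 := by omega
  have hnpos : 0 < n := Nat.pos_of_ne_zero (NeZero.ne n)
  have hhn : 2^M + 2^M = n := by rw [hn, hmM, pow_succ]; ring
  have hn2 : n / 2 = 2^M := by omega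
  have hφ0 : ∀ d, 0 ≤ φ d := fun d => (hφ d) ▸ Finset.sum_nonneg (fun i _ => sq_nonneg _)
  set T : ℕ → ZMod n → ℝ := fun k i => ∑ t ∈ Finset.range (2^k), x (i + (t:ZMod n)) with hT
  have hT0 : ∀ i, T 0 i = x i := by intro i; simp [hT]
  have hTsucc : ∀ k (i : ZMod n), T (k+1) i = T k i + T k (i + ((2^k : ℕ) : ZMod n)) := by
    intro k i
    simp only [hT]
    rw [show (2:ℕ)^(k+1) = 2^k + 2^k by ring, Finset.sum_range_add]
    congr 1
    refine Finset.sum_congr rfl (fun t _ => ?_)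
    congr 1
    push_cast
    ring
  have hTdiff : ∀ k (i : ZMod n),
      T k i - T k (i + ((2^k : ℕ) : ZMod n))
        = ∑ t ∈ Finset.range (2^k),
            (x (i + (t:ZMod n)) - x (i + (t:ZMod n) + ((2^k : ℕ) : ZMod n))) := by
    intro k i
    simp only [hT]
    rw [← Finset.sum_sub_distrib]
    refine Finset.sum_congr rfl fun t _ => ?_
    congr 2
    push_cast
    ring
  have hop : ∀ d : ℕ, d ≤ n → ∀ i : ZMod n,
      |∑ t ∈ Finset.range d, (x (i + (t:ZMod n)) - x (i + (t:ZMod n) + (d : ZMod n)))|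
        ≤ Real.sqrt d * Real.sqrt (φ d) := by
    intro d hd i
    refine cs_bound d _ (φ d) ?_
    rw [hφ d]
    exact window_le_phi (fun j => (x j - x (j + (d:ZMod n)))^2) (fun j => sq_nonneg _) d hd i
  set B : ℕ → ℝ := fun k => Real.sqrt (φ (2^k)) / Real.sqrt ((2:ℝ)^k) with hB
  have hstep : ∀ k, k < M → ∀ i : ZMod n,
      |T k i / 2^k - T (k+1) i / 2^(k+1)| ≤ B k / 2 := by
    intro k hk i
    have hdn : (2:ℕ)^k ≤ n := by
      rw [hn]; exact Nat.pow_le_pow_right (by norm_num) (by omega)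
    have e : T k i / 2^k - T (k+1) i / 2^(k+1)
        = (T k i - T k (i + ((2^k:ℕ) : ZMod n))) / 2^(k+1) := by
      rw [hTsucc k i]; field_simp; ring
    have hcast : ((2^k : ℕ) : ℝ) = (2:ℝ)^k := by push_cast; ring
    have hb := hop (2^k) hdn i
    rw [hTdiff k i] at e
    rw [e, abs_div, abs_of_pos (by positivity : (0:ℝ) < (2:ℝ)^(k+1))]
    have hs : Real.sqrt ((2:ℝ)^k) * Real.sqrt ((2:ℝ)^k) = (2:ℝ)^k :=
      Real.mul_self_sqrt (by positivity)
    have hs0 : 0 < Real.sqrt ((2:ℝ)^k) := Real.sqrt_pos.2 (by positivity)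
    have heq : (Real.sqrt ((2:ℝ)^k) * Real.sqrt (φ (2^k))) / (2:ℝ)^(k+1) = B k / 2 := by
      rw [hB, pow_succ]
      field_simp
      linear_combination (Real.sqrt (φ (2^k))) * hs
    rw [← heq]
    apply div_le_div_of_nonneg_right ?_ (by positivity)
    rw [hcast] at hb
    exact hb
  have htel : ∀ i : ZMod n, |x i - T M i / 2^M|
      ≤ (∑ k ∈ Finset.range M, B k) / 2 := by
    intro i
    have e : x i - T M i / 2^M
        = ∑ k ∈ Finset.range M, (T k i / 2^k - T (k+1) i / 2^(k+1)) := by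
      rw [Finset.sum_range_sub' (fun k => T k i / (2:ℝ)^k)]
      simp [hT0 i]
    rw [e]
    calc |∑ k ∈ Finset.range M, (T k i / 2^k - T (k+1) i / 2^(k+1))|
        ≤ ∑ k ∈ Finset.range M, |T k i / 2^k - T (k+1) i / 2^(k+1)| :=
          Finset.abs_sum_le_sum_abs _ _
      _ ≤ ∑ k ∈ Finset.range M, B k / 2 :=
          Finset.sum_le_sum (fun k hk => hstep k (Finset.mem_range.1 hk) i)
      _ = (∑ k ∈ Finset.range M, B k) / 2 := by rw [Finset.sum_div]
  -- total over a half plus shifted half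
  have htotal : ∀ i : ZMod n, T M i + T M (i + ((2^M : ℕ) : ZMod n)) = ∑ j : ZMod n, x j := by
    intro i
    have e : T M i + T M (i + ((2^M : ℕ) : ZMod n))
        = ∑ t ∈ Finset.range (2^M + 2^M), x (i + (t : ZMod n)) := by
      rw [Finset.sum_range_add]
      congr 1
      refine Finset.sum_congr rfl fun t _ => ?_
      congr 1; push_cast; ring
    rw [e, show Finset.range (2^M + 2^M) = Finset.range n from by rw [hhn],
      zmod_shift_sum]
  obtain ⟨i0, -, hi0⟩ := Finset.exists_mem_eq_sup' Finset.univ_nonempty (T M)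
  have hmax : ∀ i, T M i ≤ T M i0 := fun i => hi0 ▸ Finset.le_sup' (T M) (Finset.mem_univ i)
  have hsq : ∑ t ∈ Finset.range (2^M),
      (x (i0 + (t:ZMod n)) - x (i0 + (t:ZMod n) + ((2^M : ℕ) : ZMod n)))^2 = φ (2^M) / 2 := by
    have := half_split x (2^M) hhn i0
    rw [← hφ (2^M)] at this
    linarith
  have htop : ∀ i j : ZMod n, T M i - T M j
      ≤ Real.sqrt ((2:ℝ)^M) * Real.sqrt (φ (2^M) / 2) := by
    intro i j
    have h2 : T M i - T M j ≤ T M i0 - T M (i0 + ((2^M : ℕ) : ZMod n)) := by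
      have e1 := htotal j
      have e2 := htotal i0
      have e3 := hmax i
      have e4 := hmax (j + ((2^M : ℕ) : ZMod n))
      linarith
    have hb := cs_bound (2^M)
      (fun t => x (i0 + (t:ZMod n)) - x (i0 + (t:ZMod n) + ((2^M : ℕ) : ZMod n)))
      (φ (2^M) / 2) (le_of_eq hsq)
    rw [← hTdiff M i0] at hb
    have hcast : ((2^M : ℕ) : ℝ) = (2:ℝ)^M := by push_cast; ring
    rw [hcast] at hb
    calc T M i - T M j ≤ T M i0 - T M (i0 + ((2^M : ℕ) : ZMod n)) := h2
      _ ≤ |T M i0 - T M (i0 + ((2^M : ℕ) : ZMod n))| := le_abs_self _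
      _ ≤ Real.sqrt ((2:ℝ)^M) * Real.sqrt (φ (2^M) / 2) := hb
  -- assemble
  obtain ⟨imax, -, hsup⟩ := Finset.exists_mem_eq_sup' Finset.univ_nonempty x
  obtain ⟨imin, -, hinf⟩ := Finset.exists_mem_eq_inf' Finset.univ_nonempty x
  rw [hsup, hinf]
  have main : x imax - x imin
      ≤ ∑ k ∈ Finset.range M, B k
        + Real.sqrt ((2:ℝ)^M) * Real.sqrt (φ (2^M) / 2) / (2:ℝ)^M := by
    have t1 := abs_le.1 (htel imax)
    have t2 := abs_le.1 (htel imin)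
    have t3 := htop imax imin
    have t3' : T M imax / (2:ℝ)^M - T M imin / (2:ℝ)^M
        ≤ Real.sqrt ((2:ℝ)^M) * Real.sqrt (φ (2^M) / 2) / (2:ℝ)^M := by
      rw [div_sub_div_same]
      exact div_le_div_of_nonneg_right t3 (by positivity)
    have := t1.2
    have := t2.1
    linarith [t1.2, t2.1, t3']
  have hnr : (n:ℝ) = 2 * (2:ℝ)^M := by
    have := congrArg (Nat.cast : ℕ → ℝ) hhn
    push_cast at this
    linarith
  have partA : (n:ℝ) * (Real.sqrt ((2:ℝ)^M) * Real.sqrt (φ (2^M) / 2) / (2:ℝ)^M)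
      = Real.sqrt n * Real.sqrt (φ (2^M)) := by
    have s1 : Real.sqrt ((2:ℝ)^M) * Real.sqrt (φ (2^M)/2)
        = Real.sqrt ((2:ℝ)^M * (φ (2^M)/2)) := (Real.sqrt_mul (by positivity) _).symm
    have s2 : Real.sqrt (n:ℝ) * Real.sqrt (φ (2^M))
        = Real.sqrt ((n:ℝ) * φ (2^M)) := (Real.sqrt_mul (by positivity) _).symm
    have s4 : Real.sqrt ((n:ℝ) * φ (2^M)) = 2 * Real.sqrt ((2:ℝ)^M * (φ (2^M)/2)) := by
      rw [show (n:ℝ) * φ (2^M) = (2:ℝ)^2 * ((2:ℝ)^M * (φ (2^M)/2)) from by rw [hnr]; ring,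
        Real.sqrt_mul (by positivity), Real.sqrt_sq (by norm_num)]
    rw [s2, s4, ← s1, hnr]
    have hp : (0:ℝ) < (2:ℝ)^M := by positivity
    field_simp
  have partB : ∑ k ∈ Finset.Icc 1 M, ((n:ℝ)/Real.sqrt (2^(k-1))) * Real.sqrt (φ (2^(k-1)))
      = ∑ k ∈ Finset.range M, (n:ℝ) * B k := by
    rw [show Finset.Icc 1 M = Finset.Ico 1 (M+1) from by rw [Finset.Ico_add_one_right_eq_Icc]]
    rw [Finset.sum_Ico_eq_sum_range]
    refine Finset.sum_congr rfl fun i hi => ?_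
    rw [show 1 + i - 1 = i from by omega]
    rw [hB]
    ring
  calc (n:ℝ) * (x imax - x imin)
      ≤ (n:ℝ) * (∑ k ∈ Finset.range M, B k
          + Real.sqrt ((2:ℝ)^M) * Real.sqrt (φ (2^M) / 2) / (2:ℝ)^M) :=
        mul_le_mul_of_nonneg_left main (by positivity)
    _ = Real.sqrt n * Real.sqrt (φ (n/2))
        + ∑ k ∈ Finset.Icc 1 M, ((n:ℝ)/Real.sqrt (2^(k-1))) * Real.sqrt (φ (2^(k-1))) := by
        rw [hn2, mul_add, partA, partB, Finset.mul_sum, add_comm]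
end

section
/- Define sequences of vectors Δ_k ∈ ℕ^{2^k} by Δ_0 = (n), and Δ_k = (α_k, δ_{k-1}^1 - α_k, α_k, δ_{k-1}^2 - α_k, …, α_k, δ_{k-1}^{2^{k-1}} - α_k), where α_k = ⌊n/2^{k-1}⌋/2 if ⌊n/2^{k-1}⌋ is even and α_k = ⌊⌈n/2^{k-1}⌉/2⌋ otherwise. Then for every 1 ≤ k ≤ ⌊log₂ n⌋: (1) the entries of Δ_k sum to n, and (2) every entry of Δ_k lies in {⌊n/2^k⌋, ⌈n/2^k⌉}. -/
lemma ceil_div_eq (p n : ℕ) (hp : 0 < p) :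
    (n + p - 1) / p = n / p + if n % p = 0 then 0 else 1 := by
  have h := Nat.div_add_mod n p
  rcases eq_or_ne (n % p) 0 with hr | hr
  · have e : n + p - 1 = p * (n / p) + (p - 1) := by omega
    have h1 : (p - 1) / p = 0 := Nat.div_eq_of_lt (by omega)
    rw [e, Nat.mul_add_div hp, h1]
    simp [hr]
  · have hlt : n % p < p := Nat.mod_lt n hp
    have hring : p * (n / p + 1) = p * (n / p) + p := by ring
    have e : n + p - 1 = p * (n / p + 1) + (n % p - 1) := by omega
    have h1 : (n % p - 1) / p = 0 := Nat.div_eq_of_lt (by omega)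
    rw [e, Nat.mul_add_div hp, h1]
    simp [hr]

lemma core_lem (p n : ℕ) (hp : 0 < p) (hq : 2 ≤ n / p)
    (a : ℕ) (ha : a = if (n/p) % 2 = 0 then (n/p)/2 else ((n+p-1)/p)/2) :
    a ≤ n/p ∧
    (a = n/(2*p) ∨ a = (n+2*p-1)/(2*p)) ∧
    (n/p - a = n/(2*p) ∨ n/p - a = (n+2*p-1)/(2*p)) ∧
    ((n+p-1)/p - a = n/(2*p) ∨ (n+p-1)/p - a = (n+2*p-1)/(2*p)) := by
  have hf : n/(2*p) = (n/p)/2 := by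
    rw [Nat.div_div_eq_div_mul, mul_comm]
  have hc : (n+p-1)/p = n/p + if n % p = 0 then 0 else 1 := ceil_div_eq p n hp
  have hc' : (n+2*p-1)/(2*p) = n/(2*p) + if n % (2*p) = 0 then 0 else 1 :=
    ceil_div_eq (2*p) n (by omega)
  have hr2 : n % (2*p) = p * ((n/p) % 2) + n % p := by
    have h1 := Nat.div_add_mod n p
    have h2 := Nat.div_add_mod (n/p) 2
    have hring : p * (2 * (n/p/2) + n/p % 2) = 2*p*(n/p/2) + p * (n/p % 2) := by ring
    have h2' : p * (2 * (n/p/2) + n/p % 2) = p * (n/p) := by rw [h2]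
    have e : n = 2*p*(n/p/2) + (p * (n/p % 2) + n % p) := by omega
    have hs2 : (n/p) % 2 < 2 := Nat.mod_lt _ (by norm_num)
    have hb : p * ((n/p) % 2) ≤ p * 1 := Nat.mul_le_mul_left p (by omega)
    have hlt : n % p < p := Nat.mod_lt n hp
    have hbound : p * (n/p % 2) + n % p < 2*p := by omega
    calc n % (2*p) = (2*p*(n/p/2) + (p * (n/p % 2) + n % p)) % (2*p) := by rw [← e]
      _ = (p * (n/p % 2) + n % p) % (2*p) := Nat.mul_add_mod _ _ _
      _ = p * (n/p % 2) + n % p := Nat.mod_eq_of_lt hbound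
  rw [hr2] at hc'
  rcases Nat.mod_two_eq_zero_or_one (n/p) with hs | hs <;>
    rcases eq_or_ne (n % p) 0 with hr | hr <;>
    simp [hs, hr, hp.ne'] at ha hc hc' <;> omega

lemma sum_pair (m : ℕ) (f : ℕ → ℕ) :
    ∑ j ∈ Finset.Icc 1 (2*m), f j = ∑ j ∈ Finset.Icc 1 m, (f (2*j-1) + f (2*j)) := by
  induction m with
  | zero => simp
  | succ m ih =>
    have h2 : 2*(m+1) = (2*m+1)+1 := by ring
    rw [h2, Finset.sum_Icc_succ_top (by omega), Finset.sum_Icc_succ_top (by omega),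
      Finset.sum_Icc_succ_top (by omega : 1 ≤ m+1), ih]
    have e1 : 2*(m+1)-1 = 2*m+1 := by omega
    have e2 : 2*(m+1) = 2*m+1+1 := by omega
    rw [e1, e2]
    ring

/-- The recursive halving construction Δ_k sums to n and has entries in {⌊n/2^k⌋, ⌈n/2^k⌉}. -/
theorem stmt12 (n : ℕ) (hn : 2 ≤ n)
    (α : ℕ → ℕ)
    (hα : ∀ k, α k = if (n / 2^(k-1)) % 2 = 0
      then (n / 2^(k-1)) / 2
      else ((n + 2^(k-1) - 1) / 2^(k-1)) / 2)
    (δ : ℕ → ℕ → ℕ)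
    (hδ0 : δ 0 1 = n)
    (hδ : ∀ k j, 1 ≤ k → 1 ≤ j → j ≤ 2^(k-1) →
      δ k (2*j - 1) = α k ∧ δ k (2*j) = δ (k-1) j - α k) :
    ∀ k, 1 ≤ k → k ≤ Nat.log 2 n →
      (∑ j ∈ Finset.Icc 1 (2^k), δ k j = n) ∧
      (∀ j, 1 ≤ j → j ≤ 2^k → δ k j = n / 2^k ∨ δ k j = (n + 2^k - 1) / 2^k) := by
  have key : ∀ k, k ≤ Nat.log 2 n →
      (∑ j ∈ Finset.Icc 1 (2^k), δ k j = n) ∧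
      (∀ j, 1 ≤ j → j ≤ 2^k → δ k j = n / 2^k ∨ δ k j = (n + 2^k - 1) / 2^k) := by
    intro k
    induction k with
    | zero =>
      intro _
      refine ⟨by simpa using hδ0, ?_⟩
      intro j h1 h2
      interval_cases j
      simp [hδ0]
    | succ k ih =>
      intro hk
      obtain ⟨ihs, ihm⟩ := ih (le_trans (Nat.le_succ k) hk)
      have hp : (0:ℕ) < 2^k := Nat.pow_pos (n := k) (by norm_num)
      have hle : 2^(k+1) ≤ n := Nat.pow_le_of_le_log (by omega) hk
      have hq : 2 ≤ n / 2^k := by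
        apply (Nat.le_div_iff_mul_le hp).mpr
        rw [pow_succ] at hle
        omega
      have hα' : α (k+1) = if (n / 2^k) % 2 = 0 then (n / 2^k) / 2
          else ((n + 2^k - 1) / 2^k) / 2 := by
        simpa using hα (k+1)
      obtain ⟨haq, hm1, hm2, hm3⟩ := core_lem (2^k) n hp hq (α (k+1)) hα'
      have epow : 2*2^k = 2^(k+1) := by ring
      rw [epow] at hm1 hm2 hm3
      have hcge : n / 2^k ≤ (n + 2^k - 1) / 2^k := by
        rw [ceil_div_eq (2^k) n hp]; omega
      have hrec : ∀ j', 1 ≤ j' → j' ≤ 2^k →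
          δ (k+1) (2*j' - 1) = α (k+1) ∧ δ (k+1) (2*j') = δ k j' - α (k+1) := by
        intro j' h1 h2
        simpa using hδ (k+1) j' (by omega) h1 h2
      constructor
      · have hps : ∑ j ∈ Finset.Icc 1 (2^(k+1)), δ (k+1) j
            = ∑ j ∈ Finset.Icc 1 (2^k), (δ (k+1) (2*j-1) + δ (k+1) (2*j)) := by
          rw [← epow]; exact sum_pair (2^k) _
        rw [hps, ← ihs]
        apply Finset.sum_congr rfl
        intro j' hj'
        simp only [Finset.mem_Icc] at hj'
        obtain ⟨e1, e2⟩ := hrec j' hj'.1 hj'.2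
        rw [e1, e2]
        have hmem := ihm j' hj'.1 hj'.2
        have : α (k+1) ≤ δ k j' := by rcases hmem with h | h <;> omega
        omega
      · intro j h1 h2
        have h2' : j ≤ 2*2^k := by rw [epow]; exact h2
        obtain ⟨j', hj1, hj2, hjcase⟩ :
            ∃ j', 1 ≤ j' ∧ j' ≤ 2^k ∧ (j = 2*j' - 1 ∨ j = 2*j') :=
          ⟨(j+1)/2, by omega, by omega, by omega⟩
        obtain ⟨e1, e2⟩ := hrec j' hj1 hj2
        rcases hjcase with rfl | rfl
        · rw [e1]; exact hm1
        · rw [e2]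
          rcases ihm j' hj1 hj2 with h | h <;> rw [h]
          · exact hm2
          · exact hm3
  intro k _ hk
  exact key k hk
end

section
/- Let x : ZMod n → ℝ, and let A, B be disjoint nonempty subsets of ZMod n and α ∈ ZMod n be such that for every u ∈ A ∪ B there exists v in the other set with v = u + α or u = v + α. Then 2·Gap_{A∪B}(x) ≤ 2·max_{j ∈ A∪B} |x(j) - x(j+α)| + Gap_A(x) + Gap_B(x). -/
/-- Merging two α-paired disjoint sets: bound on the gap of the union. -/
theorem stmt15 (n : ℕ) (x : ZMod n → ℝ)
    (A B : Finset (ZMod n)) (hA : A.Nonempty) (hB : B.Nonempty)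
    (hdisj : Disjoint A B) (α : ZMod n)
    (hAB : ∀ u ∈ A, ∃ v ∈ B, v = u + α ∨ u = v + α)
    (hBA : ∀ u ∈ B, ∃ v ∈ A, v = u + α ∨ u = v + α)
    (hUn : (A ∪ B).Nonempty) :
    2 * ((A ∪ B).sup' hUn x - (A ∪ B).inf' hUn x) ≤
      2 * (A ∪ B).sup' hUn (fun j => |x j - x (j + α)|) +
      (A.sup' hA x - A.inf' hA x) + (B.sup' hB x - B.inf' hB x) := by
  set D := (A ∪ B).sup' hUn (fun j => |x j - x (j + α)|) with hDdef
  have key : ∀ u ∈ A ∪ B, ∀ v ∈ A ∪ B, (v = u + α ∨ u = v + α) → |x u - x v| ≤ D := by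
    intro u hu v hv hc
    rcases hc with rfl | rfl
    · exact Finset.le_sup' (fun j => |x j - x (j + α)|) hu
    · rw [abs_sub_comm]
      exact Finset.le_sup' (fun j => |x j - x (j + α)|) hv
  have h1 : A.sup' hA x - D ≤ B.sup' hB x := by
    obtain ⟨u, hu, hxu⟩ := A.exists_mem_eq_sup' hA x
    obtain ⟨v, hv, hc⟩ := hAB u hu
    have h := key u (Finset.mem_union_left _ hu) v (Finset.mem_union_right _ hv) hc
    have h2 := (abs_le.mp h).2
    have h3 : x v ≤ B.sup' hB x := Finset.le_sup' x hv
    linarith [hxu ▸ h2]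
  have h2 : B.sup' hB x - D ≤ A.sup' hA x := by
    obtain ⟨u, hu, hxu⟩ := B.exists_mem_eq_sup' hB x
    obtain ⟨v, hv, hc⟩ := hBA u hu
    have h := key u (Finset.mem_union_right _ hu) v (Finset.mem_union_left _ hv) hc
    have h2 := (abs_le.mp h).2
    have h3 : x v ≤ A.sup' hA x := Finset.le_sup' x hv
    linarith [hxu ▸ h2]
  have h3 : B.inf' hB x ≤ A.inf' hA x + D := by
    obtain ⟨u, hu, hxu⟩ := A.exists_mem_eq_inf' hA x
    obtain ⟨v, hv, hc⟩ := hAB u hu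
    have h := key u (Finset.mem_union_left _ hu) v (Finset.mem_union_right _ hv) hc
    have h2 := (abs_le.mp h).1
    have h3 : B.inf' hB x ≤ x v := Finset.inf'_le x hv
    linarith [hxu ▸ h2]
  have h4 : A.inf' hA x ≤ B.inf' hB x + D := by
    obtain ⟨u, hu, hxu⟩ := B.exists_mem_eq_inf' hB x
    obtain ⟨v, hv, hc⟩ := hBA u hu
    have h := key u (Finset.mem_union_right _ hu) v (Finset.mem_union_left _ hv) hc
    have h2 := (abs_le.mp h).1
    have h3 : A.inf' hA x ≤ x v := Finset.inf'_le x hv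
    linarith [hxu ▸ h2]
  have hs : (A ∪ B).sup' hUn x = A.sup' hA x ⊔ B.sup' hB x := Finset.sup'_union hA hB x
  have hi : (A ∪ B).inf' hUn x = A.inf' hA x ⊓ B.inf' hB x := Finset.inf'_union hA hB x
  rw [hs, hi]
  rcases max_choice (A.sup' hA x) (B.sup' hB x) with hm | hm <;>
    rcases min_choice (A.inf' hA x) (B.inf' hB x) with hn | hn <;>
    rw [hm, hn] <;> linarith
end
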